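/- Let h(x) = 12x³/(1 − 2x) − 6x³/(1 − x) and define Wh(x) = x(x−1)h'(x)/h(x) − log h(x) for x ∈ [0.1, 0.2]. Then Wh has a unique root x̂ in the open interval (0.1, 0.2). -/

import Mathlib

noncomputable def hfun (x : ℝ) : ℝ := 12 * x^3 / (1 - 2*x) - 6 * x^3 / (1 - x)

noncomputable def Wh (x : ℝ) : ℝ :=
  x * (x - 1) * deriv hfun x / hfun x - Real.log (hfun x)

noncomputable def Gfun (x : ℝ) : ℝ :=
  2*x - 3 + (2*x^2 - 2*x)/(1 - 2*x)
    - Real.log 6 - 3*Real.log x + Real.log (1 - 2*x) + Real.log (1 - x)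

lemma hfun_hasDeriv {x : ℝ} (h2 : (1:ℝ) - 2*x ≠ 0) (h1 : (1:ℝ) - x ≠ 0) :
    HasDerivAt hfun
      ((36*x^2*(1-2*x) + 24*x^3)/(1-2*x)^2 - (18*x^2*(1-x) + 6*x^3)/(1-x)^2) x := by
  have hx3 : HasDerivAt (fun x : ℝ => 12*x^3) (12*(3*x^2)) x := by
    simpa using (hasDerivAt_pow 3 x).const_mul 12
  have hx3' : HasDerivAt (fun x : ℝ => 6*x^3) (6*(3*x^2)) x := by
    simpa using (hasDerivAt_pow 3 x).const_mul 6
  have hd2 : HasDerivAt (fun x : ℝ => 1 - 2*x) (-2) x := by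
    simpa using ((hasDerivAt_id x).const_mul 2).const_sub 1
  have hd1 : HasDerivAt (fun x : ℝ => 1 - x) (-1) x := by
    simpa using (hasDerivAt_id x).const_sub 1
  have q1 := hx3.div hd2 h2
  have q2 := hx3'.div hd1 h1
  have := q1.sub q2
  refine this.congr_deriv ?_
  field_simp
  ring

lemma hfun_eq {x : ℝ} (h2 : (1:ℝ) - 2*x ≠ 0) (h1 : (1:ℝ) - x ≠ 0) :
    hfun x = 6*x^3/((1-2*x)*(1-x)) := by
  unfold hfun; rw [div_sub_div _ _ h2 h1]; ring

lemma Wh_eq_G {x : ℝ} (hx : x ∈ Set.Ioo (0.05:ℝ) 0.25) : Wh x = Gfun x := by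
  obtain ⟨ha, hb⟩ := hx
  have hx0 : 0 < x := by linarith
  have h2 : (0:ℝ) < 1 - 2*x := by norm_num at hb ⊢; linarith
  have h1 : (0:ℝ) < 1 - x := by linarith
  have hD := (hfun_hasDeriv h2.ne' h1.ne').deriv
  have hh : hfun x = 6*x^3/((1-2*x)*(1-x)) := hfun_eq h2.ne' h1.ne'
  have hlog : Real.log (hfun x)
      = Real.log 6 + 3*Real.log x - Real.log (1-2*x) - Real.log (1-x) := by
    rw [hh, Real.log_div (by positivity) (by positivity),
      Real.log_mul (by norm_num) (by positivity),
      Real.log_mul h2.ne' h1.ne', Real.log_pow]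
    push_cast; ring
  have hrat : x * (x - 1) * deriv hfun x / hfun x
      = 2*x - 3 + (2*x^2 - 2*x)/(1 - 2*x) := by
    rw [hD, hh]
    rw [eq_comm, ← sub_eq_zero]
    field_simp
    ring
  unfold Wh Gfun
  rw [hrat, hlog]
  ring

lemma Gfun_hasDeriv {x : ℝ} (hx0 : 0 < x) (h2 : (0:ℝ) < 1 - 2*x) (h1 : (0:ℝ) < 1 - x) :
    HasDerivAt Gfun (4*x*(x-1)/(1-2*x)^2 - 3/x - 2/(1-2*x) - 1/(1-x)) x := by
  have hd2 : HasDerivAt (fun x : ℝ => 1 - 2*x) (-2) x := by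
    simpa using ((hasDerivAt_id x).const_mul 2).const_sub 1
  have hd1 : HasDerivAt (fun x : ℝ => 1 - x) (-1) x := by
    simpa using (hasDerivAt_id x).const_sub 1
  have hnum : HasDerivAt (fun x : ℝ => 2*x^2 - 2*x) (2*(2*x) - 2) x := by
    exact (((hasDerivAt_pow 2 x).const_mul 2).sub ((hasDerivAt_id x).const_mul 2)).congr_deriv (by norm_num)
  have hq := hnum.div hd2 h2.ne'
  have hlin : HasDerivAt (fun x : ℝ => 2*x - 3) 2 x := by
    simpa using ((hasDerivAt_id x).const_mul 2).sub_const 3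
  have hlx : HasDerivAt (fun x : ℝ => 3*Real.log x) (3*(1/x)) x :=
    by simpa using (Real.hasDerivAt_log hx0.ne').const_mul 3
  have hl2 : HasDerivAt (fun x : ℝ => Real.log (1 - 2*x)) (-2/(1-2*x)) x := by
    simpa using hd2.log h2.ne'
  have hl1 : HasDerivAt (fun x : ℝ => Real.log (1 - x)) (-1/(1-x)) x := by
    simpa using hd1.log h1.ne'
  have := ((((hlin.add hq).sub_const (Real.log 6)).sub hlx).add hl2).add hl1
  refine this.congr_deriv ?_
  field_simp
  ring

lemma Gfun_anti : StrictAntiOn Gfun (Set.Icc (0.1:ℝ) 0.2) := by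
  have hsub : Set.Icc (0.1:ℝ) 0.2 ⊆ Set.Ioo (0.05:ℝ) 0.25 := by
    intro x hx; constructor <;> [linarith [hx.1]; linarith [hx.2]]
  apply strictAntiOn_of_deriv_neg (convex_Icc _ _)
  · intro x hx
    obtain ⟨ha, hb⟩ := hsub hx
    have hx0 : 0 < x := by linarith
    have h2 : (0:ℝ) < 1 - 2*x := by norm_num at hb ⊢; linarith
    have h1 : (0:ℝ) < 1 - x := by linarith
    exact (Gfun_hasDeriv hx0 h2 h1).continuousAt.continuousWithinAt
  · intro x hx
    rw [interior_Icc] at hx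
    obtain ⟨ha, hb⟩ := hx
    have hx0 : 0 < x := by linarith
    have h2 : (0:ℝ) < 1 - 2*x := by norm_num at hb ⊢; linarith
    have h1 : (0:ℝ) < 1 - x := by linarith
    rw [(Gfun_hasDeriv hx0 h2 h1).deriv]
    have t1 : 4*x*(x-1)/(1-2*x)^2 ≤ 0 := by
      apply div_nonpos_of_nonpos_of_nonneg
      · nlinarith
      · positivity
    have t2 : 0 < 3/x := by positivity
    have t3 : 0 < 2/(1-2*x) := by positivity
    have t4 : 0 < 1/(1-x) := by positivity
    linarith

lemma Gfun_pos : 0 < Gfun 0.1 := by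
  have h120 : Real.log (1-2*(0.1:ℝ)) + Real.log (1-(0.1:ℝ)) - Real.log 6
      - 3*Real.log (0.1:ℝ) = Real.log 120 := by
    have h : (120:ℝ) = (1-2*0.1)*(1-0.1)/(6*(0.1:ℝ)^3) := by norm_num
    rw [h, Real.log_div (by norm_num) (by norm_num),
      Real.log_mul (by norm_num) (by norm_num),
      Real.log_mul (by norm_num) (by norm_num), Real.log_pow]
    push_cast; ring
  have hlog : (121:ℝ)/40 < Real.log 120 := by
    rw [Real.lt_log_iff_exp_lt (by norm_num : (0:ℝ) < 120)]
    calc Real.exp (121/40) ≤ Real.exp 4 := Real.exp_le_exp.mpr (by norm_num)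
      _ = (Real.exp 1)^4 := by rw [← Real.exp_nat_mul]; norm_num
      _ < 2.7182818286^4 :=
          pow_lt_pow_left₀ Real.exp_one_lt_d9 (Real.exp_pos 1).le (by norm_num)
      _ < 120 := by norm_num
  have hrat : 2*(0.1:ℝ) - 3 + (2*(0.1:ℝ)^2 - 2*0.1)/(1 - 2*0.1) = -(121/40) := by
    norm_num
  unfold Gfun
  nlinarith [h120, hlog, hrat]

lemma Gfun_neg : Gfun 0.2 < 0 := by
  have h10 : Real.log (1-2*(0.2:ℝ)) + Real.log (1-(0.2:ℝ)) - Real.log 6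
      - 3*Real.log (0.2:ℝ) = Real.log 10 := by
    have h : (10:ℝ) = (1-2*0.2)*(1-0.2)/(6*(0.2:ℝ)^3) := by norm_num
    rw [h, Real.log_div (by norm_num) (by norm_num),
      Real.log_mul (by norm_num) (by norm_num),
      Real.log_mul (by norm_num) (by norm_num), Real.log_pow]
    push_cast; ring
  have hlog : Real.log 10 < (47:ℝ)/15 := by
    rw [Real.log_lt_iff_lt_exp (by norm_num : (0:ℝ) < 10)]
    calc (10:ℝ) < 2.7182818283^3 := by norm_num
      _ < (Real.exp 1)^3 :=
          pow_lt_pow_left₀ Real.exp_one_gt_d9 (by norm_num) (by norm_num)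
      _ = Real.exp 3 := by rw [← Real.exp_nat_mul]; norm_num
      _ ≤ Real.exp (47/15) := Real.exp_le_exp.mpr (by norm_num)
  have hrat : 2*(0.2:ℝ) - 3 + (2*(0.2:ℝ)^2 - 2*0.2)/(1 - 2*0.2) = -(47/15) := by
    norm_num
  unfold Gfun
  nlinarith [h10, hlog, hrat]

lemma Icc_sub : Set.Icc (0.1:ℝ) 0.2 ⊆ Set.Ioo (0.05:ℝ) 0.25 := by
  intro x hx; constructor <;> [linarith [hx.1]; linarith [hx.2]]

theorem Wh_unique_root' : ∃! x : ℝ, x ∈ Set.Ioo (0.1 : ℝ) 0.2 ∧ Wh x = 0 := by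
  have hcont : ContinuousOn Gfun (Set.Icc (0.1:ℝ) 0.2) := by
    intro x hx
    obtain ⟨ha, hb⟩ := Icc_sub hx
    have hx0 : 0 < x := by linarith
    have h2 : (0:ℝ) < 1 - 2*x := by norm_num at hb ⊢; linarith
    have h1 : (0:ℝ) < 1 - x := by linarith
    exact (Gfun_hasDeriv hx0 h2 h1).continuousAt.continuousWithinAt
  have hiv := intermediate_value_Ioo' (by norm_num : (0.1:ℝ) ≤ 0.2) hcont
  have h0 : (0:ℝ) ∈ Set.Ioo (Gfun 0.2) (Gfun 0.1) := ⟨Gfun_neg, Gfun_pos⟩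
  obtain ⟨x, hx, hGx⟩ := hiv h0
  have hIcc : ∀ y ∈ Set.Ioo (0.1:ℝ) 0.2, y ∈ Set.Icc (0.1:ℝ) 0.2 :=
    fun y hy => ⟨hy.1.le, hy.2.le⟩
  refine ⟨x, ⟨hx, ?_⟩, ?_⟩
  · rw [Wh_eq_G (Icc_sub (hIcc x hx)), hGx]
  · rintro y ⟨hy, hWy⟩
    have hGy : Gfun y = 0 := by rw [← Wh_eq_G (Icc_sub (hIcc y hy))]; exact hWy
    exact Gfun_anti.injOn (hIcc y hy) (hIcc x hx) (by rw [hGy, hGx])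

theorem Wh_unique_root : ∃! x : ℝ, x ∈ Set.Ioo (0.1 : ℝ) 0.2 ∧ Wh x = 0 :=
  Wh_unique_root'
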